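/- Suppose q_v > 0 for all v. Let q_min = min_{v∈V} q_v, q_max = max_{v∈V} q_v, and ξ = q_max/q_min. If b := max_{v∈V} Σ_{w∈N_v} λ_w/(1+λ_w) < 1, then the mixing time of the parallel Glauber dynamics satisfies T_mix ≤ ⌈log(nξe) / (q_min(1−b))⌉. -/

import Mathlib

open Finset

variable {V : Type*} [Fintype V] [DecidableEq V]

/-- A finite set of vertices is independent in `G`. -/
def IsInd (G : SimpleGraph V) [DecidableRel G.Adj] (s : Finset V) : Prop :=
  ∀ v ∈ s, ∀ w ∈ s, ¬ G.Adj v w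

instance (G : SimpleGraph V) [DecidableRel G.Adj] (s : Finset V) :
    Decidable (IsInd G s) := by
  unfold IsInd; infer_instance

/-- `q_v`: probability that vertex `v` belongs to the decision schedule. -/
noncomputable def qVert (q : Finset V → ℝ) (v : V) : ℝ :=
  ∑ m ∈ univ.filter (fun m => v ∈ m), q m

/-- Per-vertex factor of the transition probability of the parallel Glauber
dynamics, given current schedule `σ`, decision schedule `m`, next schedule `σ'`. -/
noncomputable def stepFactor (G : SimpleGraph V) [DecidableRel G.Adj] (lam : V → ℝ)
    (σ m σ' : Finset V) (v : V) : ℝ :=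
  if v ∈ m then
    (if ∃ w ∈ σ, G.Adj v w then (if v ∈ σ' then 0 else 1)
     else (if v ∈ σ' then lam v / (1 + lam v) else 1 / (1 + lam v)))
  else (if (v ∈ σ' ↔ v ∈ σ) then 1 else 0)

/-- Transition matrix of the parallel Glauber dynamics. -/
noncomputable def pgdP (G : SimpleGraph V) [DecidableRel G.Adj] (lam : V → ℝ)
    (q : Finset V → ℝ) (σ σ' : Finset V) : ℝ :=
  ∑ m : Finset V, q m * ∏ v : V, stepFactor G lam σ m σ' v

/-- Distribution at time `t` of a Markov chain with transition matrix `P`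
started at state `x`. -/
noncomputable def chainDist {S : Type*} [Fintype S] [DecidableEq S]
    (P : S → S → ℝ) (x : S) : ℕ → S → ℝ
  | 0 => fun s => if s = x then 1 else 0
  | t + 1 => fun s => ∑ s' : S, chainDist P x t s' * P s' s

/-- `t`-step transition probabilities. -/
noncomputable def chainPow {S : Type*} [Fintype S] [DecidableEq S]
    (P : S → S → ℝ) : ℕ → S → S → ℝ
  | 0 => fun x y => if x = y then 1 else 0
  | t + 1 => fun x y => ∑ z : S, chainPow P t x z * P z y

/-- Total variation distance between two distributions on a finite set. -/
noncomputable def tvDist {S : Type*} [Fintype S] (μ ν : S → ℝ) : ℝ :=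
  (1 / 2) * ∑ s : S, |μ s - ν s|

/-- The product-form distribution on independent sets with fugacities `lam`. -/
noncomputable def prodForm (G : SimpleGraph V) [DecidableRel G.Adj]
    (lam : V → ℝ) (σ : Finset V) : ℝ :=
  if IsInd G σ then
    (∏ v ∈ σ, lam v) / (∑ σ' ∈ univ.filter (fun s => IsInd G s), ∏ v ∈ σ', lam v)
  else 0

/-- Mixing time: the maximum over starting states in `states` of the first time
the distribution is within `1/e` of `π` in total variation. -/
noncomputable def mixTime {S : Type*} [Fintype S] [DecidableEq S]
    (P : S → S → ℝ) (π : S → ℝ) (states : Finset S) : ℕ :=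
  states.sup fun x => sInf {t : ℕ | tvDist (chainDist P x t) π ≤ 1 / Real.exp 1}

set_option linter.unusedSectionVars false

section AuxPGD


lemma key1 (f g : V → ℝ) :
    ∑ s : Finset V, ∏ v : V, (if v ∈ s then f v else g v) = ∏ v : V, (f v + g v) := by
  rw [Finset.prod_add, ← Finset.powerset_univ]
  apply Finset.sum_congr rfl
  intro t _
  rw [Finset.prod_ite]
  congr 1
  · apply Finset.prod_congr _ (fun _ _ => rfl)
    ext a; simp
  · apply Finset.prod_congr _ (fun _ _ => rfl)
    ext a; simp

lemma key2 (f₁₁ f₁₀ f₀₁ f₀₀ : V → ℝ) :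
    (∑ s : Finset V, ∑ t : Finset V, ∏ v : V,
      (if v ∈ s then (if v ∈ t then f₁₁ v else f₁₀ v) else (if v ∈ t then f₀₁ v else f₀₀ v)))
    = ∏ v : V, (f₁₁ v + f₁₀ v + f₀₁ v + f₀₀ v) := by
  have h : ∀ s : Finset V, (∑ t : Finset V, ∏ v : V,
      (if v ∈ s then (if v ∈ t then f₁₁ v else f₁₀ v) else (if v ∈ t then f₀₁ v else f₀₀ v)))
      = ∏ v : V, (if v ∈ s then f₁₁ v + f₁₀ v else f₀₁ v + f₀₀ v) := by
    intro s
    have := key1 (fun v => if v ∈ s then f₁₁ v else f₀₁ v) (fun v => if v ∈ s then f₁₀ v else f₀₀ v)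
    rw [show (∑ t : Finset V, ∏ v : V,
      (if v ∈ s then (if v ∈ t then f₁₁ v else f₁₀ v) else (if v ∈ t then f₀₁ v else f₀₀ v)))
      = ∑ t : Finset V, ∏ v : V,
      (if v ∈ t then (if v ∈ s then f₁₁ v else f₀₁ v) else (if v ∈ s then f₁₀ v else f₀₀ v))
      from Finset.sum_congr rfl (fun t _ => Finset.prod_congr rfl
        (fun v _ => by by_cases h1 : v ∈ s <;> by_cases h2 : v ∈ t <;> simp [h1, h2])), this]
    exact Finset.prod_congr rfl (fun v _ => by by_cases h1 : v ∈ s <;> simp [h1])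
  rw [Finset.sum_congr rfl (fun s _ => h s), key1]
  exact Finset.prod_congr rfl (fun v _ => by ring)


section CF
variable (G : SimpleGraph V) [DecidableRel G.Adj] (lam : V → ℝ)

noncomputable def cA (σ τ m : Finset V) (v : V) : ℝ :=
  if v ∈ m then (if (∃ w ∈ σ, G.Adj v w) ∨ (∃ w ∈ τ, G.Adj v w) then 0 else lam v / (1 + lam v))
  else (if v ∈ σ then (if v ∈ τ then 1 else 0) else 0)

noncomputable def cB (σ τ m : Finset V) (v : V) : ℝ :=
  if v ∈ m then (if ¬(∃ w ∈ σ, G.Adj v w) ∧ (∃ w ∈ τ, G.Adj v w) then lam v / (1 + lam v) else 0)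
  else (if v ∈ σ then (if v ∈ τ then 0 else 1) else 0)

noncomputable def cC (σ τ m : Finset V) (v : V) : ℝ :=
  if v ∈ m then (if (∃ w ∈ σ, G.Adj v w) ∧ ¬(∃ w ∈ τ, G.Adj v w) then lam v / (1 + lam v) else 0)
  else (if v ∈ σ then 0 else (if v ∈ τ then 1 else 0))

noncomputable def cD (σ τ m : Finset V) (v : V) : ℝ :=
  if v ∈ m then (if (∃ w ∈ σ, G.Adj v w) ∧ (∃ w ∈ τ, G.Adj v w) then 1 else 1 / (1 + lam v))
  else (if v ∈ σ then 0 else (if v ∈ τ then 0 else 1))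

noncomputable def cf (σ τ m σ' τ' : Finset V) (v : V) : ℝ :=
  if v ∈ σ' then (if v ∈ τ' then cA G lam σ τ m v else cB G lam σ τ m v)
  else (if v ∈ τ' then cC G lam σ τ m v else cD G lam σ τ m v)

variable (hlam : ∀ v, 0 < lam v)
include hlam

lemma pr_one (v : V) : lam v / (1 + lam v) + 1 / (1 + lam v) = 1 := by
  have h : (0:ℝ) < 1 + lam v := by linarith [hlam v]
  field_simp
  ring

lemma cAB (σ τ m σ' : Finset V) (v : V) :
    (if v ∈ σ' then cA G lam σ τ m v + cB G lam σ τ m v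
     else cC G lam σ τ m v + cD G lam σ τ m v) = stepFactor G lam σ m σ' v := by
  have h1 : lam v / (1 + lam v) + (1 + lam v)⁻¹ = 1 := by
    have := pr_one lam hlam v; rw [one_div] at this; exact this
  unfold cA cB cC cD stepFactor
  by_cases h2 : v ∈ m <;> by_cases h3 : ∃ w ∈ σ, G.Adj v w <;>
    by_cases h4 : ∃ w ∈ τ, G.Adj v w <;> by_cases h5 : v ∈ σ' <;>
    by_cases h6 : v ∈ σ <;> by_cases h7 : v ∈ τ <;>
    simp [h2, h3, h4, h5, h6, h7] <;> linarith

lemma cAC (σ τ m τ' : Finset V) (v : V) :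
    (if v ∈ τ' then cA G lam σ τ m v + cC G lam σ τ m v
     else cB G lam σ τ m v + cD G lam σ τ m v) = stepFactor G lam τ m τ' v := by
  have h1 : lam v / (1 + lam v) + (1 + lam v)⁻¹ = 1 := by
    have := pr_one lam hlam v; rw [one_div] at this; exact this
  unfold cA cB cC cD stepFactor
  by_cases h2 : v ∈ m <;> by_cases h3 : ∃ w ∈ σ, G.Adj v w <;>
    by_cases h4 : ∃ w ∈ τ, G.Adj v w <;> by_cases h5 : v ∈ τ' <;>
    by_cases h6 : v ∈ σ <;> by_cases h7 : v ∈ τ <;>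
    simp [h2, h3, h4, h5, h6, h7] <;> linarith

lemma cSum (σ τ m : Finset V) (v : V) :
    cA G lam σ τ m v + cB G lam σ τ m v + cC G lam σ τ m v + cD G lam σ τ m v = 1 := by
  have h1 : lam v / (1 + lam v) + (1 + lam v)⁻¹ = 1 := by
    have := pr_one lam hlam v; rw [one_div] at this; exact this
  unfold cA cB cC cD
  by_cases h2 : v ∈ m <;> by_cases h3 : ∃ w ∈ σ, G.Adj v w <;>
    by_cases h4 : ∃ w ∈ τ, G.Adj v w <;> by_cases h6 : v ∈ σ <;> by_cases h7 : v ∈ τ <;>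
    simp [h2, h3, h4, h6, h7] <;> linarith

lemma cBC (σ τ m : Finset V) (v : V) :
    cB G lam σ τ m v + cC G lam σ τ m v =
      if v ∈ m then
        (if ((∃ w ∈ σ, G.Adj v w) ↔ (∃ w ∈ τ, G.Adj v w)) then 0 else lam v / (1 + lam v))
      else (if (v ∈ σ ↔ v ∈ τ) then 0 else 1) := by
  unfold cB cC
  by_cases h2 : v ∈ m <;> by_cases h3 : ∃ w ∈ σ, G.Adj v w <;>
    by_cases h4 : ∃ w ∈ τ, G.Adj v w <;> by_cases h6 : v ∈ σ <;> by_cases h7 : v ∈ τ <;>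
    simp [h2, h3, h4, h6, h7]

lemma cf_nonneg (σ τ m σ' τ' : Finset V) (v : V) : 0 ≤ cf G lam σ τ m σ' τ' v := by
  have h1 : (0:ℝ) < 1 + lam v := by linarith [hlam v]
  have hp : (0:ℝ) ≤ lam v / (1 + lam v) := div_nonneg (hlam v).le h1.le
  have hr : (0:ℝ) ≤ 1 / (1 + lam v) := div_nonneg zero_le_one h1.le
  unfold cf cA cB cC cD
  split_ifs <;> simp_all <;> linarith

lemma stepFactor_nonneg (σ m σ' : Finset V) (v : V) : 0 ≤ stepFactor G lam σ m σ' v := by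
  have h1 : (0:ℝ) < 1 + lam v := by linarith [hlam v]
  have hp : (0:ℝ) ≤ lam v / (1 + lam v) := div_nonneg (hlam v).le h1.le
  have hr : (0:ℝ) ≤ 1 / (1 + lam v) := div_nonneg zero_le_one h1.le
  unfold stepFactor
  split_ifs <;> simp_all <;> linarith

end CF
section Sums
variable (G : SimpleGraph V) [DecidableRel G.Adj] (lam : V → ℝ)

lemma rowSum (hlam : ∀ v, 0 < lam v) (σ m : Finset V) :
    ∑ σ' : Finset V, ∏ v : V, stepFactor G lam σ m σ' v = 1 := by
  have h : ∀ σ' : Finset V, ∀ v : V, stepFactor G lam σ m σ' v =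
      if v ∈ σ' then (if v ∈ m then (if ∃ w ∈ σ, G.Adj v w then 0 else lam v / (1 + lam v))
          else (if v ∈ σ then 1 else 0))
        else (if v ∈ m then (if ∃ w ∈ σ, G.Adj v w then 1 else 1 / (1 + lam v))
          else (if v ∈ σ then 0 else 1)) := by
    intro σ' v
    unfold stepFactor
    by_cases h2 : v ∈ m <;> by_cases h3 : ∃ w ∈ σ, G.Adj v w <;>
      by_cases h5 : v ∈ σ' <;> by_cases h6 : v ∈ σ <;> simp [h2, h3, h5, h6]
  rw [Finset.sum_congr rfl (fun σ' _ => Finset.prod_congr rfl (fun v _ => h σ' v)), key1]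
  apply Finset.prod_eq_one
  intro v _
  have h1 : lam v / (1 + lam v) + (1 + lam v)⁻¹ = 1 := by
    have := pr_one lam hlam v; rw [one_div] at this; exact this
  by_cases h2 : v ∈ m <;> by_cases h3 : ∃ w ∈ σ, G.Adj v w <;>
    by_cases h6 : v ∈ σ <;> simp [h2, h3, h6] <;> linarith

lemma S1 (hlam : ∀ v, 0 < lam v) (σ τ m σ' : Finset V) :
    ∑ τ' : Finset V, ∏ v : V, cf G lam σ τ m σ' τ' v = ∏ v : V, stepFactor G lam σ m σ' v := by
  have h : ∀ τ' : Finset V, ∀ v : V, cf G lam σ τ m σ' τ' v =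
      if v ∈ τ' then (if v ∈ σ' then cA G lam σ τ m v else cC G lam σ τ m v)
      else (if v ∈ σ' then cB G lam σ τ m v else cD G lam σ τ m v) := by
    intro τ' v
    unfold cf
    by_cases h5 : v ∈ σ' <;> by_cases h6 : v ∈ τ' <;> simp [h5, h6]
  rw [Finset.sum_congr rfl (fun τ' _ => Finset.prod_congr rfl (fun v _ => h τ' v)), key1]
  apply Finset.prod_congr rfl
  intro v _
  have := cAB G lam hlam σ τ m σ' v
  by_cases h5 : v ∈ σ' <;> simp only [h5, if_true, if_false] at this ⊢ <;> exact this

lemma S2 (hlam : ∀ v, 0 < lam v) (σ τ m τ' : Finset V) :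
    ∑ σ' : Finset V, ∏ v : V, cf G lam σ τ m σ' τ' v = ∏ v : V, stepFactor G lam τ m τ' v := by
  unfold cf
  rw [key1]
  apply Finset.prod_congr rfl
  intro v _
  have := cAC G lam hlam σ τ m τ' v
  by_cases h6 : v ∈ τ' <;> simp only [h6, if_true, if_false] at this ⊢ <;> exact this

lemma S3 (hlam : ∀ v, 0 < lam v) (σ τ m : Finset V) (v0 : V) :
    ∑ σ' : Finset V, ∑ τ' : Finset V,
      (if (v0 ∈ σ' ↔ v0 ∈ τ') then 0 else 1) * ∏ v : V, cf G lam σ τ m σ' τ' v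
    = cB G lam σ τ m v0 + cC G lam σ τ m v0 := by
  have key := key2 (fun v => if v = v0 then 0 else cA G lam σ τ m v) (cB G lam σ τ m)
    (cC G lam σ τ m) (fun v => if v = v0 then 0 else cD G lam σ τ m v)
  have h : ∀ σ' τ' : Finset V,
      (if (v0 ∈ σ' ↔ v0 ∈ τ') then (0:ℝ) else 1) * ∏ v : V, cf G lam σ τ m σ' τ' v
      = ∏ v : V, (if v ∈ σ' then (if v ∈ τ' then (if v = v0 then 0 else cA G lam σ τ m v)
          else cB G lam σ τ m v)
        else (if v ∈ τ' then cC G lam σ τ m v else (if v = v0 then 0 else cD G lam σ τ m v))) := by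
    intro σ' τ'
    have hpt : ∀ v : V, (if v ∈ σ' then (if v ∈ τ' then (if v = v0 then 0 else cA G lam σ τ m v)
          else cB G lam σ τ m v)
        else (if v ∈ τ' then cC G lam σ τ m v else (if v = v0 then 0 else cD G lam σ τ m v)))
        = (if v = v0 then (if (v0 ∈ σ' ↔ v0 ∈ τ') then (0:ℝ) else 1) else 1) *
            cf G lam σ τ m σ' τ' v := by
      intro v
      unfold cf
      by_cases hv : v = v0
      · subst hv
        by_cases h5 : v ∈ σ' <;> by_cases h6 : v ∈ τ' <;> simp [h5, h6]
      · by_cases h5 : v ∈ σ' <;> by_cases h6 : v ∈ τ' <;> simp [h5, h6, hv]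
    rw [Finset.prod_congr rfl (fun v _ => hpt v), Finset.prod_mul_distrib,
      Finset.prod_ite_eq' univ v0 (fun _ => if (v0 ∈ σ' ↔ v0 ∈ τ') then (0:ℝ) else 1)]
    simp
  rw [Finset.sum_congr rfl (fun σ' _ => Finset.sum_congr rfl (fun τ' _ => h σ' τ')), key]
  have hpt2 : ∀ v : V, ((if v = v0 then (0:ℝ) else cA G lam σ τ m v) + cB G lam σ τ m v +
      cC G lam σ τ m v + (if v = v0 then (0:ℝ) else cD G lam σ τ m v))
      = (if v = v0 then cB G lam σ τ m v0 + cC G lam σ τ m v0 else 1) := by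
    intro v
    by_cases hv : v = v0
    · subst hv; simp
    · simp only [hv, if_false]
      exact cSum G lam hlam σ τ m v
  rw [Finset.prod_congr rfl (fun v _ => hpt2 v),
    Finset.prod_ite_eq' univ v0 (fun _ => cB G lam σ τ m v0 + cC G lam σ τ m v0)]
  simp

end Sums

lemma sum4_comm {A B C D : Type*} [Fintype A] [Fintype B] [Fintype C] [Fintype D]
    (F : A → B → C → D → ℝ) :
    ∑ a : A, ∑ b : B, ∑ c : C, ∑ d : D, F a b c d
      = ∑ c : C, ∑ d : D, ∑ a : A, ∑ b : B, F a b c d := by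
  calc ∑ a : A, ∑ b : B, ∑ c : C, ∑ d : D, F a b c d
      = ∑ a : A, ∑ c : C, ∑ b : B, ∑ d : D, F a b c d :=
        Finset.sum_congr rfl (fun a _ => Finset.sum_comm)
    _ = ∑ c : C, ∑ a : A, ∑ b : B, ∑ d : D, F a b c d := Finset.sum_comm
    _ = ∑ c : C, ∑ a : A, ∑ d : D, ∑ b : B, F a b c d :=
        Finset.sum_congr rfl (fun c _ => Finset.sum_congr rfl (fun a _ => Finset.sum_comm))
    _ = ∑ c : C, ∑ d : D, ∑ a : A, ∑ b : B, F a b c d :=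
        Finset.sum_congr rfl (fun c _ => Finset.sum_comm)

section Coupled
variable (G : SimpleGraph V) [DecidableRel G.Adj] (lam : V → ℝ) (q : Finset V → ℝ)

noncomputable def cQ (σ τ σ' τ' : Finset V) : ℝ :=
  ∑ m : Finset V, q m * ∏ v : V, cf G lam σ τ m σ' τ' v

noncomputable def cPow (x y : Finset V) : ℕ → Finset V → Finset V → ℝ
  | 0 => fun σ τ => if σ = x ∧ τ = y then 1 else 0
  | t + 1 => fun σ' τ' => ∑ σ : Finset V, ∑ τ : Finset V,
      cPow x y t σ τ * cQ G lam q σ τ σ' τ'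

variable (hlam : ∀ v, 0 < lam v) (hq0 : ∀ m, 0 ≤ q m)
include hlam hq0

lemma cQ_nonneg (σ τ σ' τ' : Finset V) : 0 ≤ cQ G lam q σ τ σ' τ' := by
  apply Finset.sum_nonneg
  intro m _
  exact mul_nonneg (hq0 m) (Finset.prod_nonneg (fun v _ => cf_nonneg G lam hlam σ τ m σ' τ' v))

lemma cPow_nonneg (x y : Finset V) (t : ℕ) (σ τ : Finset V) :
    0 ≤ cPow G lam q x y t σ τ := by
  induction t generalizing σ τ with
  | zero => unfold cPow; split_ifs <;> norm_num
  | succ t ih =>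
    unfold cPow
    exact Finset.sum_nonneg fun σ0 _ => Finset.sum_nonneg fun τ0 _ =>
      mul_nonneg (ih σ0 τ0) (cQ_nonneg G lam q hlam hq0 σ0 τ0 σ τ)

lemma cQ_marg1 (σ τ σ' : Finset V) :
    ∑ τ' : Finset V, cQ G lam q σ τ σ' τ' = pgdP G lam q σ σ' := by
  unfold cQ pgdP
  rw [Finset.sum_comm]
  apply Finset.sum_congr rfl
  intro m _
  rw [← Finset.mul_sum, S1 G lam hlam σ τ m σ']

lemma cQ_marg2 (σ τ τ' : Finset V) :
    ∑ σ' : Finset V, cQ G lam q σ τ σ' τ' = pgdP G lam q τ τ' := by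
  unfold cQ pgdP
  rw [Finset.sum_comm]
  apply Finset.sum_congr rfl
  intro m _
  rw [← Finset.mul_sum, S2 G lam hlam σ τ m τ']

lemma cPow_marg1 (x y : Finset V) (t : ℕ) (σ : Finset V) :
    ∑ τ : Finset V, cPow G lam q x y t σ τ = chainPow (pgdP G lam q) t x σ := by
  induction t generalizing σ with
  | zero =>
    unfold cPow chainPow
    by_cases h : σ = x
    · subst h
      simp
    · rw [if_neg (fun hh => h hh.symm), Finset.sum_eq_zero]
      intro τ _
      rw [if_neg (by tauto)]
  | succ t ih =>
    unfold cPow chainPow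
    rw [Finset.sum_comm]
    calc ∑ σ0 : Finset V, ∑ τ' : Finset V, ∑ τ0 : Finset V,
          cPow G lam q x y t σ0 τ0 * cQ G lam q σ0 τ0 σ τ'
        = ∑ σ0 : Finset V, ∑ τ0 : Finset V,
          cPow G lam q x y t σ0 τ0 * pgdP G lam q σ0 σ := by
          apply Finset.sum_congr rfl; intro σ0 _
          rw [Finset.sum_comm]
          apply Finset.sum_congr rfl; intro τ0 _
          rw [← Finset.mul_sum, cQ_marg1 G lam q hlam hq0 σ0 τ0 σ]
      _ = ∑ σ0 : Finset V, (∑ τ0 : Finset V, cPow G lam q x y t σ0 τ0) * pgdP G lam q σ0 σ := by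
          apply Finset.sum_congr rfl; intro σ0 _
          rw [Finset.sum_mul]
      _ = ∑ σ0 : Finset V, chainPow (pgdP G lam q) t x σ0 * pgdP G lam q σ0 σ := by
          apply Finset.sum_congr rfl; intro σ0 _
          rw [ih]

lemma cPow_marg2 (x y : Finset V) (t : ℕ) (τ : Finset V) :
    ∑ σ : Finset V, cPow G lam q x y t σ τ = chainPow (pgdP G lam q) t y τ := by
  induction t generalizing τ with
  | zero =>
    unfold cPow chainPow
    by_cases h : τ = y
    · subst h
      simp
    · rw [if_neg (fun hh => h hh.symm), Finset.sum_eq_zero]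
      intro σ _
      rw [if_neg (by tauto)]
  | succ t ih =>
    unfold cPow chainPow
    rw [Finset.sum_comm]
    calc ∑ σ0 : Finset V, ∑ σ' : Finset V, ∑ τ0 : Finset V,
          cPow G lam q x y t σ0 τ0 * cQ G lam q σ0 τ0 σ' τ
        = ∑ σ0 : Finset V, ∑ τ0 : Finset V,
          cPow G lam q x y t σ0 τ0 * pgdP G lam q τ0 τ := by
          apply Finset.sum_congr rfl; intro σ0 _
          rw [Finset.sum_comm]
          apply Finset.sum_congr rfl; intro τ0 _
          rw [← Finset.mul_sum, cQ_marg2 G lam q hlam hq0 σ0 τ0 τ]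
      _ = ∑ τ0 : Finset V, (∑ σ0 : Finset V, cPow G lam q x y t σ0 τ0) * pgdP G lam q τ0 τ := by
          rw [Finset.sum_comm]
          apply Finset.sum_congr rfl; intro τ0 _
          rw [Finset.sum_mul]
      _ = ∑ τ0 : Finset V, chainPow (pgdP G lam q) t y τ0 * pgdP G lam q τ0 τ := by
          apply Finset.sum_congr rfl; intro τ0 _
          rw [ih]

/-- probability the coupled chains disagree at `v` at time `t`. -/
noncomputable def dv (x y : Finset V) (t : ℕ) (v : V) : ℝ :=
  ∑ σ : Finset V, ∑ τ : Finset V,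
    (if (v ∈ σ ↔ v ∈ τ) then 0 else 1) * cPow G lam q x y t σ τ

lemma dv_nonneg (x y : Finset V) (t : ℕ) (v : V) : 0 ≤ dv G lam q x y t v := by
  apply Finset.sum_nonneg; intro σ _
  apply Finset.sum_nonneg; intro τ _
  have := cPow_nonneg G lam q hlam hq0 x y t σ τ
  split_ifs <;> simp [this]

lemma dv_rec (x y : Finset V) (t : ℕ) (v0 : V) :
    dv G lam q x y (t+1) v0 = ∑ σ : Finset V, ∑ τ : Finset V,
      cPow G lam q x y t σ τ *
        ∑ m : Finset V, q m * (cB G lam σ τ m v0 + cC G lam σ τ m v0) := by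
  calc dv G lam q x y (t+1) v0
      = ∑ σ' : Finset V, ∑ τ' : Finset V, (if (v0 ∈ σ' ↔ v0 ∈ τ') then (0:ℝ) else 1) *
          ∑ σ : Finset V, ∑ τ : Finset V, cPow G lam q x y t σ τ * cQ G lam q σ τ σ' τ' := rfl
    _ = ∑ σ' : Finset V, ∑ τ' : Finset V, ∑ σ : Finset V, ∑ τ : Finset V,
          cPow G lam q x y t σ τ *
            ((if (v0 ∈ σ' ↔ v0 ∈ τ') then (0:ℝ) else 1) * cQ G lam q σ τ σ' τ') := by
        apply Finset.sum_congr rfl; intro σ' _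
        apply Finset.sum_congr rfl; intro τ' _
        rw [Finset.mul_sum]
        apply Finset.sum_congr rfl; intro σ _
        rw [Finset.mul_sum]
        apply Finset.sum_congr rfl; intro τ _
        ring
    _ = ∑ σ : Finset V, ∑ τ : Finset V, ∑ σ' : Finset V, ∑ τ' : Finset V,
          cPow G lam q x y t σ τ *
            ((if (v0 ∈ σ' ↔ v0 ∈ τ') then (0:ℝ) else 1) * cQ G lam q σ τ σ' τ') :=
        sum4_comm _
    _ = ∑ σ : Finset V, ∑ τ : Finset V, cPow G lam q x y t σ τ *
          ∑ σ' : Finset V, ∑ τ' : Finset V,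
            (if (v0 ∈ σ' ↔ v0 ∈ τ') then (0:ℝ) else 1) * cQ G lam q σ τ σ' τ' := by
        apply Finset.sum_congr rfl; intro σ _
        apply Finset.sum_congr rfl; intro τ _
        rw [Finset.mul_sum]
        apply Finset.sum_congr rfl; intro σ' _
        rw [Finset.mul_sum]
    _ = ∑ σ : Finset V, ∑ τ : Finset V, cPow G lam q x y t σ τ *
          ∑ m : Finset V, q m * (cB G lam σ τ m v0 + cC G lam σ τ m v0) := by
        apply Finset.sum_congr rfl; intro σ _
        apply Finset.sum_congr rfl; intro τ _
        congr 1
        calc ∑ σ' : Finset V, ∑ τ' : Finset V,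
              (if (v0 ∈ σ' ↔ v0 ∈ τ') then (0:ℝ) else 1) * cQ G lam q σ τ σ' τ'
            = ∑ σ' : Finset V, ∑ m : Finset V, ∑ τ' : Finset V, q m *
                ((if (v0 ∈ σ' ↔ v0 ∈ τ') then (0:ℝ) else 1) * ∏ v : V, cf G lam σ τ m σ' τ' v) := by
              apply Finset.sum_congr rfl; intro σ' _
              rw [Finset.sum_comm]
              apply Finset.sum_congr rfl; intro τ' _
              unfold cQ
              rw [Finset.mul_sum]
              apply Finset.sum_congr rfl; intro m _
              ring
          _ = ∑ m : Finset V, q m * ∑ σ' : Finset V, ∑ τ' : Finset V,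
                (if (v0 ∈ σ' ↔ v0 ∈ τ') then (0:ℝ) else 1) * ∏ v : V, cf G lam σ τ m σ' τ' v := by
              rw [Finset.sum_comm]
              apply Finset.sum_congr rfl; intro m _
              rw [Finset.mul_sum]
              apply Finset.sum_congr rfl; intro σ' _
              rw [Finset.mul_sum]
          _ = ∑ m : Finset V, q m * (cB G lam σ τ m v0 + cC G lam σ τ m v0) := by
              apply Finset.sum_congr rfl; intro m _
              rw [S3 G lam hlam σ τ m v0]

end Coupled
section Contract
variable (G : SimpleGraph V) [DecidableRel G.Adj] (lam : V → ℝ) (q : Finset V → ℝ)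
variable (hlam : ∀ v, 0 < lam v) (hq0 : ∀ m, 0 ≤ q m) (hqsum : ∑ m : Finset V, q m = 1)

include hq0 in
lemma qVert_nonneg : ∀ v, 0 ≤ qVert q v := by
  intro v
  exact Finset.sum_nonneg fun m _ => hq0 m

include hlam hq0 hqsum in
lemma step_bound (σ τ : Finset V) (v0 : V) :
    ∑ m : Finset V, q m * (cB G lam σ τ m v0 + cC G lam σ τ m v0)
    ≤ (1 - qVert q v0) * (if (v0 ∈ σ ↔ v0 ∈ τ) then 0 else 1)
      + qVert q v0 * (lam v0 / (1 + lam v0)) *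
        ∑ w ∈ G.neighborFinset v0, (if (w ∈ σ ↔ w ∈ τ) then 0 else 1) := by
  set I : ℝ := if ((∃ w ∈ σ, G.Adj v0 w) ↔ (∃ w ∈ τ, G.Adj v0 w)) then 0
    else lam v0 / (1 + lam v0) with hI
  set J : ℝ := if (v0 ∈ σ ↔ v0 ∈ τ) then 0 else 1 with hJ
  have hsplit : ∑ m : Finset V, q m * (cB G lam σ τ m v0 + cC G lam σ τ m v0)
      = qVert q v0 * I + (1 - qVert q v0) * J := by
    have h1 : ∀ m : Finset V, q m * (cB G lam σ τ m v0 + cC G lam σ τ m v0)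
        = if v0 ∈ m then q m * I else q m * J := by
      intro m
      rw [cBC G lam hlam σ τ m v0]
      by_cases hm : v0 ∈ m <;> simp [hm, hI, hJ]
    have h2 : ∑ m ∈ univ.filter (fun m => ¬ v0 ∈ m), q m = 1 - qVert q v0 := by
      have := Finset.sum_filter_add_sum_filter_not univ (fun m => v0 ∈ m) q
      rw [hqsum] at this
      unfold qVert
      linarith
    rw [Finset.sum_congr rfl (fun m _ => h1 m), Finset.sum_ite, ← Finset.sum_mul,
      ← Finset.sum_mul, h2]
    rfl
  rw [hsplit]
  have hp : (0:ℝ) ≤ lam v0 / (1 + lam v0) :=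
    div_nonneg (hlam v0).le (by linarith [hlam v0])
  have hwind : ∀ w : V, (0:ℝ) ≤ (if (w ∈ σ ↔ w ∈ τ) then 0 else 1) := by
    intro w; split_ifs <;> norm_num
  have hIle : I ≤ (lam v0 / (1 + lam v0)) *
      ∑ w ∈ G.neighborFinset v0, (if (w ∈ σ ↔ w ∈ τ) then 0 else 1) := by
    rw [hI]
    split_ifs with hiff
    · positivity
    · have hwit : ∃ w ∈ G.neighborFinset v0, (if (w ∈ σ ↔ w ∈ τ) then (0:ℝ) else 1) = 1 := by
        by_cases hσ : ∃ w ∈ σ, G.Adj v0 w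
        · have hτ : ¬ ∃ w ∈ τ, G.Adj v0 w := fun h => hiff (iff_of_true hσ h)
          obtain ⟨w, hwσ, hadj⟩ := hσ
          refine ⟨w, by rwa [SimpleGraph.mem_neighborFinset], ?_⟩
          have hwτ : w ∉ τ := fun hwτ => hτ ⟨w, hwτ, hadj⟩
          rw [if_neg (by tauto)]
        · have hτ : ∃ w ∈ τ, G.Adj v0 w := by
            by_contra hτ
            exact hiff (iff_of_false hσ hτ)
          obtain ⟨w, hwτ, hadj⟩ := hτ
          refine ⟨w, by rwa [SimpleGraph.mem_neighborFinset], ?_⟩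
          have hwσ : w ∉ σ := fun hwσ => hσ ⟨w, hwσ, hadj⟩
          rw [if_neg (by tauto)]
      obtain ⟨w, hwmem, hw1⟩ := hwit
      have hsum : (1:ℝ) ≤ ∑ w ∈ G.neighborFinset v0, (if (w ∈ σ ↔ w ∈ τ) then 0 else 1) := by
        calc (1:ℝ) = (if (w ∈ σ ↔ w ∈ τ) then (0:ℝ) else 1) := hw1.symm
          _ ≤ _ := Finset.single_le_sum (fun w _ => hwind w) hwmem
      calc lam v0 / (1 + lam v0) = lam v0 / (1 + lam v0) * 1 := by ring
        _ ≤ _ := by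
          apply mul_le_mul_of_nonneg_left hsum hp
  have hq1 : 0 ≤ qVert q v0 := qVert_nonneg q hq0 v0
  have := mul_le_mul_of_nonneg_left hIle hq1
  linarith [this]

include hlam hq0 hqsum in
lemma dv_step (x y : Finset V) (t : ℕ) (v0 : V) :
    dv G lam q x y (t+1) v0 ≤ (1 - qVert q v0) * dv G lam q x y t v0
      + qVert q v0 * (lam v0 / (1 + lam v0)) * ∑ w ∈ G.neighborFinset v0, dv G lam q x y t w := by
  rw [dv_rec G lam q hlam hq0 x y t v0]
  calc ∑ σ : Finset V, ∑ τ : Finset V, cPow G lam q x y t σ τ *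
        ∑ m : Finset V, q m * (cB G lam σ τ m v0 + cC G lam σ τ m v0)
      ≤ ∑ σ : Finset V, ∑ τ : Finset V, cPow G lam q x y t σ τ *
        ((1 - qVert q v0) * (if (v0 ∈ σ ↔ v0 ∈ τ) then 0 else 1)
          + qVert q v0 * (lam v0 / (1 + lam v0)) *
            ∑ w ∈ G.neighborFinset v0, (if (w ∈ σ ↔ w ∈ τ) then 0 else 1)) := by
        apply Finset.sum_le_sum; intro σ _
        apply Finset.sum_le_sum; intro τ _
        exact mul_le_mul_of_nonneg_left (step_bound G lam q hlam hq0 hqsum σ τ v0)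
          (cPow_nonneg G lam q hlam hq0 x y t σ τ)
    _ = (1 - qVert q v0) * dv G lam q x y t v0
      + qVert q v0 * (lam v0 / (1 + lam v0)) * ∑ w ∈ G.neighborFinset v0, dv G lam q x y t w := by
        have hterm : ∀ σ τ : Finset V, cPow G lam q x y t σ τ *
            ((1 - qVert q v0) * (if (v0 ∈ σ ↔ v0 ∈ τ) then 0 else 1)
              + qVert q v0 * (lam v0 / (1 + lam v0)) *
                ∑ w ∈ G.neighborFinset v0, (if (w ∈ σ ↔ w ∈ τ) then 0 else 1))
            = (1 - qVert q v0) * ((if (v0 ∈ σ ↔ v0 ∈ τ) then 0 else 1) * cPow G lam q x y t σ τ)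
              + ∑ w ∈ G.neighborFinset v0, qVert q v0 * (lam v0 / (1 + lam v0)) *
                  ((if (w ∈ σ ↔ w ∈ τ) then 0 else 1) * cPow G lam q x y t σ τ) := by
          intro σ τ
          rw [mul_add]
          congr 1
          · ring
          · calc cPow G lam q x y t σ τ * (qVert q v0 * (lam v0 / (1 + lam v0)) *
                  ∑ w ∈ G.neighborFinset v0, (if (w ∈ σ ↔ w ∈ τ) then 0 else 1))
                = (∑ w ∈ G.neighborFinset v0, (if (w ∈ σ ↔ w ∈ τ) then (0:ℝ) else 1)) *
                    (qVert q v0 * (lam v0 / (1 + lam v0)) * cPow G lam q x y t σ τ) := by ring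
              _ = ∑ w ∈ G.neighborFinset v0, (if (w ∈ σ ↔ w ∈ τ) then (0:ℝ) else 1) *
                    (qVert q v0 * (lam v0 / (1 + lam v0)) * cPow G lam q x y t σ τ) :=
                  Finset.sum_mul _ _ _
              _ = _ := Finset.sum_congr rfl (fun w _ => by ring)
        rw [Finset.sum_congr rfl (fun σ _ => Finset.sum_congr rfl (fun τ _ => hterm σ τ))]
        rw [Finset.sum_congr rfl (fun σ _ => Finset.sum_add_distrib), Finset.sum_add_distrib]
        congr 1
        · unfold dv
          rw [Finset.mul_sum]
          apply Finset.sum_congr rfl; intro σ _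
          rw [Finset.mul_sum]
        · calc ∑ σ : Finset V, ∑ τ : Finset V, ∑ w ∈ G.neighborFinset v0,
                qVert q v0 * (lam v0 / (1 + lam v0)) *
                  ((if (w ∈ σ ↔ w ∈ τ) then 0 else 1) * cPow G lam q x y t σ τ)
              = ∑ σ : Finset V, ∑ w ∈ G.neighborFinset v0, ∑ τ : Finset V,
                qVert q v0 * (lam v0 / (1 + lam v0)) *
                  ((if (w ∈ σ ↔ w ∈ τ) then 0 else 1) * cPow G lam q x y t σ τ) :=
                Finset.sum_congr rfl (fun σ _ => Finset.sum_comm)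
            _ = ∑ w ∈ G.neighborFinset v0, ∑ σ : Finset V, ∑ τ : Finset V,
                qVert q v0 * (lam v0 / (1 + lam v0)) *
                  ((if (w ∈ σ ↔ w ∈ τ) then 0 else 1) * cPow G lam q x y t σ τ) :=
                Finset.sum_comm
            _ = ∑ w ∈ G.neighborFinset v0, qVert q v0 * (lam v0 / (1 + lam v0)) *
                  ∑ σ : Finset V, ∑ τ : Finset V,
                    (if (w ∈ σ ↔ w ∈ τ) then 0 else 1) * cPow G lam q x y t σ τ := by
                apply Finset.sum_congr rfl; intro w _
                rw [Finset.mul_sum]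
                apply Finset.sum_congr rfl; intro σ _
                rw [Finset.mul_sum]
            _ = qVert q v0 * (lam v0 / (1 + lam v0)) * ∑ w ∈ G.neighborFinset v0,
                  dv G lam q x y t w := by
                rw [Finset.mul_sum]
                rfl

end Contract
section Phi
variable (G : SimpleGraph V) [DecidableRel G.Adj] (lam : V → ℝ) (q : Finset V → ℝ)

noncomputable def Phi (x y : Finset V) (t : ℕ) : ℝ :=
  ∑ v : V, dv G lam q x y t v / qVert q v

variable (hlam : ∀ v, 0 < lam v) (hq0 : ∀ m, 0 ≤ q m) (hqsum : ∑ m : Finset V, q m = 1)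
  (hqv : ∀ v, 0 < qVert q v) (qmin b : ℝ)
  (hqmin_pos : 0 < qmin) (hqmin_le : ∀ v, qmin ≤ qVert q v)
  (hbge : ∀ v, ∑ w ∈ G.neighborFinset v, lam w / (1 + lam w) ≤ b)
  (hb0 : 0 ≤ b) (hb1 : b < 1)

include hlam hq0 hqsum hqv hqmin_pos hqmin_le hbge hb0 hb1 in
lemma Phi_contract (x y : Finset V) (t : ℕ) :
    Phi G lam q x y (t+1) ≤ (1 - qmin * (1 - b)) * Phi G lam q x y t := by
  have hd : ∀ v, 0 ≤ dv G lam q x y t v := dv_nonneg G lam q hlam hq0 x y t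
  have hp : ∀ v, (0:ℝ) ≤ lam v / (1 + lam v) :=
    fun v => div_nonneg (hlam v).le (by linarith [hlam v])
  have step1 : Phi G lam q x y (t+1) ≤
      ∑ v : V, (dv G lam q x y t v / qVert q v - dv G lam q x y t v
        + (lam v / (1 + lam v)) * ∑ w ∈ G.neighborFinset v, dv G lam q x y t w) := by
    apply Finset.sum_le_sum
    intro v _
    have h1 := dv_step G lam q hlam hq0 hqsum x y t v
    have hq := hqv v
    calc dv G lam q x y (t+1) v / qVert q v
        ≤ ((1 - qVert q v) * dv G lam q x y t v
          + qVert q v * (lam v / (1 + lam v)) * ∑ w ∈ G.neighborFinset v, dv G lam q x y t w)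
            / qVert q v := (div_le_div_iff_of_pos_right hq).mpr h1
      _ = dv G lam q x y t v / qVert q v - dv G lam q x y t v
          + (lam v / (1 + lam v)) * ∑ w ∈ G.neighborFinset v, dv G lam q x y t w := by
          field_simp
          try ring
  have step2 : ∑ v : V, (lam v / (1 + lam v)) * ∑ w ∈ G.neighborFinset v, dv G lam q x y t w
      ≤ b * ∑ v : V, dv G lam q x y t v := by
    have swap : ∑ v : V, (lam v / (1 + lam v)) * ∑ w ∈ G.neighborFinset v, dv G lam q x y t w
        = ∑ w : V, dv G lam q x y t w *
            ∑ v ∈ G.neighborFinset w, lam v / (1 + lam v) := by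
      calc ∑ v : V, (lam v / (1 + lam v)) * ∑ w ∈ G.neighborFinset v, dv G lam q x y t w
          = ∑ v : V, ∑ w : V, (if G.Adj v w then (lam v / (1 + lam v)) * dv G lam q x y t w
              else 0) := by
            apply Finset.sum_congr rfl; intro v _
            rw [Finset.mul_sum, SimpleGraph.neighborFinset_eq_filter, Finset.sum_filter]
        _ = ∑ w : V, ∑ v : V, (if G.Adj v w then (lam v / (1 + lam v)) * dv G lam q x y t w
              else 0) := Finset.sum_comm
        _ = ∑ w : V, dv G lam q x y t w * ∑ v ∈ G.neighborFinset w, lam v / (1 + lam v) := by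
            apply Finset.sum_congr rfl; intro w _
            rw [Finset.mul_sum, SimpleGraph.neighborFinset_eq_filter, Finset.sum_filter]
            apply Finset.sum_congr rfl; intro v _
            by_cases h : G.Adj w v
            · rw [if_pos ((G.adj_comm v w).mpr h), if_pos h]; ring
            · rw [if_neg (fun hh => h ((G.adj_comm v w).mp hh)), if_neg h]
    rw [swap, Finset.mul_sum]
    apply Finset.sum_le_sum
    intro w _
    calc dv G lam q x y t w * ∑ v ∈ G.neighborFinset w, lam v / (1 + lam v)
        ≤ dv G lam q x y t w * b := mul_le_mul_of_nonneg_left (hbge w) (hd w)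
      _ = b * dv G lam q x y t w := by ring
  have step3 : qmin * Phi G lam q x y t ≤ ∑ v : V, dv G lam q x y t v := by
    unfold Phi
    rw [Finset.mul_sum]
    apply Finset.sum_le_sum
    intro v _
    calc qmin * (dv G lam q x y t v / qVert q v)
        ≤ qVert q v * (dv G lam q x y t v / qVert q v) :=
          mul_le_mul_of_nonneg_right (hqmin_le v) (div_nonneg (hd v) (hqv v).le)
      _ = dv G lam q x y t v := by
          rw [mul_comm, div_mul_cancel₀ _ (ne_of_gt (hqv v))]
  calc Phi G lam q x y (t+1)
      ≤ ∑ v : V, (dv G lam q x y t v / qVert q v - dv G lam q x y t v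
        + (lam v / (1 + lam v)) * ∑ w ∈ G.neighborFinset v, dv G lam q x y t w) := step1
    _ = Phi G lam q x y t - (∑ v : V, dv G lam q x y t v)
        + ∑ v : V, (lam v / (1 + lam v)) * ∑ w ∈ G.neighborFinset v, dv G lam q x y t w := by
        unfold Phi
        rw [Finset.sum_add_distrib, Finset.sum_sub_distrib]
    _ ≤ Phi G lam q x y t - (∑ v : V, dv G lam q x y t v)
        + b * ∑ v : V, dv G lam q x y t v := by linarith [step2]
    _ = Phi G lam q x y t - (1 - b) * ∑ v : V, dv G lam q x y t v := by ring
    _ ≤ Phi G lam q x y t - (1 - b) * (qmin * Phi G lam q x y t) := by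
        have h1b : (0:ℝ) ≤ 1 - b := by linarith
        nlinarith [step3]
    _ = (1 - qmin * (1 - b)) * Phi G lam q x y t := by ring

include hlam hq0 hqsum hqv hqmin_pos hqmin_le hbge hb0 hb1 in
lemma Phi_decay [Nonempty V] (x y : Finset V) (t : ℕ) :
    Phi G lam q x y t ≤ (1 - qmin * (1 - b))^t * ((Fintype.card V : ℝ) / qmin) := by
  have hqmin1 : qmin ≤ 1 := by
    classical
    obtain ⟨v⟩ := ‹Nonempty V›
    have h1 : qVert q v ≤ 1 := by
      rw [← hqsum]
      unfold qVert
      apply Finset.sum_le_sum_of_subset_of_nonneg (Finset.filter_subset _ _)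
      intro m _ _; exact hq0 m
    linarith [hqmin_le v]
  have hκ : 0 ≤ 1 - qmin * (1 - b) := by nlinarith
  induction t with
  | zero =>
    simp only [pow_zero, one_mul]
    unfold Phi
    have hcard : (Fintype.card V : ℝ) / qmin = ∑ _v : V, (1:ℝ) / qmin := by
      rw [Finset.sum_const, Finset.card_univ, nsmul_eq_mul]
      ring
    rw [hcard]
    apply Finset.sum_le_sum
    intro v _
    have hdv1 : dv G lam q x y 0 v ≤ 1 := by
      unfold dv cPow
      calc ∑ σ : Finset V, ∑ τ : Finset V, (if (v ∈ σ ↔ v ∈ τ) then (0:ℝ) else 1) *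
            (if σ = x ∧ τ = y then 1 else 0)
          ≤ ∑ σ : Finset V, ∑ τ : Finset V, (if σ = x ∧ τ = y then (1:ℝ) else 0) := by
            apply Finset.sum_le_sum; intro σ _
            apply Finset.sum_le_sum; intro τ _
            split_ifs <;> norm_num
        _ = 1 := by
            simp [ite_and]
    exact div_le_div₀ zero_le_one hdv1 hqmin_pos (hqmin_le v)
  | succ t ih =>
    calc Phi G lam q x y (t+1)
        ≤ (1 - qmin * (1 - b)) * Phi G lam q x y t :=
          Phi_contract G lam q hlam hq0 hqsum hqv qmin b hqmin_pos hqmin_le hbge hb0 hb1 x y t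
      _ ≤ (1 - qmin * (1 - b)) * ((1 - qmin * (1 - b))^t * ((Fintype.card V : ℝ) / qmin)) :=
          mul_le_mul_of_nonneg_left ih hκ
      _ = (1 - qmin * (1 - b))^(t+1) * ((Fintype.card V : ℝ) / qmin) := by ring

end Phi
section Stat
variable (G : SimpleGraph V) [DecidableRel G.Adj] (lam : V → ℝ) (q : Finset V → ℝ)

noncomputable def wgt (σ : Finset V) : ℝ := if IsInd G σ then ∏ v ∈ σ, lam v else 0

lemma prod_zero_of (hm : IsInd G m) (hσ' : IsInd G σ') (hσ : ¬ IsInd G σ) :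
    ∏ v : V, stepFactor G lam σ' m σ v = 0 := by
  unfold IsInd at hσ
  push_neg at hσ
  obtain ⟨v, hv, w, hw, hadj⟩ := hσ
  have hvw : ¬ (v ∈ m ∧ w ∈ m) := fun ⟨h1, h2⟩ => hm v h1 w h2 hadj
  have hfac : ∃ u : V, stepFactor G lam σ' m σ u = 0 := by
    by_cases hvm : v ∈ m
    · have hwm : w ∉ m := fun h => hvw ⟨hvm, h⟩
      by_cases hwσ' : w ∈ σ'
      · refine ⟨v, ?_⟩
        unfold stepFactor
        rw [if_pos hvm, if_pos ⟨w, hwσ', hadj⟩, if_pos hv]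
      · refine ⟨w, ?_⟩
        unfold stepFactor
        rw [if_neg hwm, if_neg (by tauto)]
    · by_cases hwm : w ∈ m
      · by_cases hvσ' : v ∈ σ'
        · refine ⟨w, ?_⟩
          unfold stepFactor
          rw [if_pos hwm, if_pos ⟨v, hvσ', G.adj_symm hadj⟩, if_pos hw]
        · refine ⟨v, ?_⟩
          unfold stepFactor
          rw [if_neg hvm, if_neg (by tauto)]
      · by_cases hvσ' : v ∈ σ'
        · by_cases hwσ' : w ∈ σ'
          · exact absurd hadj (hσ' v hvσ' w hwσ')
          · refine ⟨w, ?_⟩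
            unfold stepFactor
            rw [if_neg hwm, if_neg (by tauto)]
        · refine ⟨v, ?_⟩
          unfold stepFactor
          rw [if_neg hvm, if_neg (by tauto)]
  obtain ⟨u, hu⟩ := hfac
  exact Finset.prod_eq_zero (Finset.mem_univ u) hu

lemma detailed (hlam : ∀ v, 0 < lam v) (m σ σ' : Finset V) (hm : IsInd G m) :
    wgt G lam σ * ∏ v : V, stepFactor G lam σ m σ' v
      = wgt G lam σ' * ∏ v : V, stepFactor G lam σ' m σ v := by
  by_cases hσ : IsInd G σ
  · by_cases hσ' : IsInd G σ'
    · -- both independent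
      by_cases hagree : ∀ v : V, v ∉ m → (v ∈ σ ↔ v ∈ σ')
      · -- states agree off m
        -- blocked status agrees on m
        have hblk : ∀ v ∈ m, ((∃ w ∈ σ, G.Adj v w) ↔ (∃ w ∈ σ', G.Adj v w)) := by
          intro v hvm
          constructor
          · rintro ⟨w, hwσ, hadj⟩
            have hwm : w ∉ m := fun hwm => hm v hvm w hwm hadj
            exact ⟨w, (hagree w hwm).mp hwσ, hadj⟩
          · rintro ⟨w, hwσ', hadj⟩
            have hwm : w ∉ m := fun hwm => hm v hvm w hwm hadj
            exact ⟨w, (hagree w hwm).mpr hwσ', hadj⟩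
        -- σ' members of m are unblocked in σ'
        have hub' : ∀ v ∈ m, v ∈ σ' → ¬ (∃ w ∈ σ', G.Adj v w) := by
          intro v _ hvσ' ⟨w, hwσ', hadj⟩
          exact hσ' v hvσ' w hwσ' hadj
        have hub : ∀ v ∈ m, v ∈ σ → ¬ (∃ w ∈ σ, G.Adj v w) := by
          intro v _ hvσ ⟨w, hwσ, hadj⟩
          exact hσ v hvσ w hwσ hadj
        -- factor decomposition on m
        have hfac1 : ∀ v ∈ (univ : Finset V), stepFactor G lam σ m σ' v =
            (if v ∈ m then ((if (∃ w ∈ σ, G.Adj v w) then 1 else 1 / (1 + lam v)) *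
              (if v ∈ σ' then lam v else 1)) else 1) := by
          intro v _
          unfold stepFactor
          by_cases hvm : v ∈ m
          · rw [if_pos hvm, if_pos hvm]
            by_cases hblkσ : ∃ w ∈ σ, G.Adj v w
            · have hvσ' : v ∉ σ' := by
                intro hvσ'
                exact hub' v hvm hvσ' ((hblk v hvm).mp hblkσ)
              rw [if_pos hblkσ, if_pos hblkσ, if_neg hvσ', if_neg hvσ']
              norm_num
            · rw [if_neg hblkσ, if_neg hblkσ]
              by_cases hvσ' : v ∈ σ' <;> simp [hvσ'] <;> ring
          · rw [if_neg hvm, if_neg hvm, if_pos ((hagree v hvm).symm)]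
        have hfac2 : ∀ v ∈ (univ : Finset V), stepFactor G lam σ' m σ v =
            (if v ∈ m then ((if (∃ w ∈ σ, G.Adj v w) then 1 else 1 / (1 + lam v)) *
              (if v ∈ σ then lam v else 1)) else 1) := by
          intro v _
          unfold stepFactor
          by_cases hvm : v ∈ m
          · rw [if_pos hvm, if_pos hvm]
            by_cases hblkσ : ∃ w ∈ σ, G.Adj v w
            · have hblkσ' : ∃ w ∈ σ', G.Adj v w := (hblk v hvm).mp hblkσ
              have hvσ : v ∉ σ := fun hvσ => hub v hvm hvσ hblkσ
              rw [if_pos hblkσ', if_pos hblkσ, if_neg hvσ, if_neg hvσ]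
              norm_num
            · have hblkσ' : ¬ ∃ w ∈ σ', G.Adj v w := fun h => hblkσ ((hblk v hvm).mpr h)
              rw [if_neg hblkσ', if_neg hblkσ]
              by_cases hvσ : v ∈ σ <;> simp [hvσ] <;> ring
          · rw [if_neg hvm, if_neg hvm, if_pos (hagree v hvm)]
        rw [Finset.prod_congr rfl hfac1, Finset.prod_congr rfl hfac2,
          Finset.prod_ite_mem univ m _, Finset.univ_inter,
          Finset.prod_ite_mem univ m _, Finset.univ_inter,
          Finset.prod_mul_distrib, Finset.prod_mul_distrib]
        have hw1 : wgt G lam σ =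
            (∏ v ∈ σ.filter (· ∈ m), lam v) * ∏ v ∈ σ.filter (· ∉ m), lam v := by
          unfold wgt
          rw [if_pos hσ, Finset.prod_filter_mul_prod_filter_not]
        have hw2 : wgt G lam σ' =
            (∏ v ∈ σ'.filter (· ∈ m), lam v) * ∏ v ∈ σ'.filter (· ∉ m), lam v := by
          unfold wgt
          rw [if_pos hσ', Finset.prod_filter_mul_prod_filter_not]
        have hBeq : σ.filter (fun v => v ∉ m) = σ'.filter (fun v => v ∉ m) := by
          ext v
          simp only [Finset.mem_filter]
          constructor
          · rintro ⟨h1, h2⟩; exact ⟨(hagree v h2).mp h1, h2⟩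
          · rintro ⟨h1, h2⟩; exact ⟨(hagree v h2).mpr h1, h2⟩
        have hL1 : ∏ v ∈ m, (if v ∈ σ' then lam v else 1) = ∏ v ∈ σ'.filter (· ∈ m), lam v := by
          rw [← Finset.prod_filter]
          congr 1
          rw [Finset.filter_mem_eq_inter, Finset.filter_mem_eq_inter, Finset.inter_comm]
        have hL2 : ∏ v ∈ m, (if v ∈ σ then lam v else 1) = ∏ v ∈ σ.filter (· ∈ m), lam v := by
          rw [← Finset.prod_filter]
          congr 1
          rw [Finset.filter_mem_eq_inter, Finset.filter_mem_eq_inter, Finset.inter_comm]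
        rw [hw1, hw2, hL1, hL2, hBeq]
        ring
      · -- some vertex outside m differs: both sides zero
        push_neg at hagree
        obtain ⟨v, hvm, hne⟩ := hagree
        have h1 : stepFactor G lam σ m σ' v = 0 := by
          unfold stepFactor
          rw [if_neg hvm, if_neg (by tauto)]
        have h2 : stepFactor G lam σ' m σ v = 0 := by
          unfold stepFactor
          rw [if_neg hvm, if_neg (by tauto)]
        rw [Finset.prod_eq_zero (Finset.mem_univ v) h1,
          Finset.prod_eq_zero (Finset.mem_univ v) h2]
        ring
    · -- σ' not independent
      have h2 : wgt G lam σ' = 0 := by unfold wgt; rw [if_neg hσ']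
      rw [h2, zero_mul]
      rw [prod_zero_of G lam hm hσ hσ', mul_zero]
  · have h1 : wgt G lam σ = 0 := by unfold wgt; rw [if_neg hσ]
    rw [h1, zero_mul]
    by_cases hσ' : IsInd G σ'
    · rw [prod_zero_of G lam hm hσ' hσ, mul_zero]
    · have h2 : wgt G lam σ' = 0 := by unfold wgt; rw [if_neg hσ']
      rw [h2, zero_mul]

end Stat
section Stat2
variable (G : SimpleGraph V) [DecidableRel G.Adj] (lam : V → ℝ) (q : Finset V → ℝ)
variable (hlam : ∀ v, 0 < lam v) (hq0 : ∀ m, 0 ≤ q m)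
  (hqsupp : ∀ m, ¬ IsInd G m → q m = 0) (hqsum : ∑ m : Finset V, q m = 1)

include hlam hqsupp in
lemma pgd_rev (σ σ' : Finset V) :
    wgt G lam σ * pgdP G lam q σ σ' = wgt G lam σ' * pgdP G lam q σ' σ := by
  unfold pgdP
  rw [Finset.mul_sum, Finset.mul_sum]
  apply Finset.sum_congr rfl
  intro m _
  by_cases hq : q m = 0
  · rw [hq]; ring
  · have hm : IsInd G m := by
      by_contra h
      exact hq (hqsupp m h)
    calc wgt G lam σ * (q m * ∏ v : V, stepFactor G lam σ m σ' v)
        = q m * (wgt G lam σ * ∏ v : V, stepFactor G lam σ m σ' v) := by ring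
      _ = q m * (wgt G lam σ' * ∏ v : V, stepFactor G lam σ' m σ v) := by
          rw [detailed G lam hlam m σ σ' hm]
      _ = wgt G lam σ' * (q m * ∏ v : V, stepFactor G lam σ' m σ v) := by ring

include hlam hqsum in
lemma pgdP_rowsum (σ : Finset V) : ∑ σ' : Finset V, pgdP G lam q σ σ' = 1 := by
  unfold pgdP
  rw [Finset.sum_comm, ← hqsum]
  apply Finset.sum_congr rfl
  intro m _
  rw [← Finset.mul_sum, rowSum G lam hlam σ m, mul_one]

include hlam hq0 hqsupp hqsum in
lemma wgt_stat (σ' : Finset V) :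
    ∑ σ : Finset V, wgt G lam σ * pgdP G lam q σ σ' = wgt G lam σ' := by
  rw [Finset.sum_congr rfl (fun σ _ => pgd_rev G lam q hlam hqsupp σ σ'), ← Finset.mul_sum,
    pgdP_rowsum G lam q hlam hqsum σ', mul_one]

include hlam in
lemma Z_pos : 0 < ∑ σ' ∈ univ.filter (fun s => IsInd G s), ∏ v ∈ σ', lam v := by
  have hmem : (∅ : Finset V) ∈ univ.filter (fun s => IsInd G s) := by
    simp only [Finset.mem_filter, Finset.mem_univ, true_and]
    intro v hv
    exact absurd hv (Finset.notMem_empty v)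
  have h1 := Finset.single_le_sum (f := fun σ' => ∏ v ∈ σ', lam v)
    (fun s _ => Finset.prod_nonneg (fun v _ => (hlam v).le)) hmem
  simp only [Finset.prod_empty] at h1
  linarith

omit [Fintype V] [DecidableEq V] in
lemma prodForm_eq [Fintype V] [DecidableEq V] (σ : Finset V) : prodForm G lam σ =
    wgt G lam σ / ∑ σ' ∈ univ.filter (fun s => IsInd G s), ∏ v ∈ σ', lam v := by
  unfold prodForm wgt
  split_ifs <;> simp

include hlam in
lemma prodForm_nonneg (σ : Finset V) : 0 ≤ prodForm G lam σ := by
  rw [prodForm_eq]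
  apply div_nonneg _ (Z_pos G lam hlam).le
  unfold wgt
  split_ifs
  · exact Finset.prod_nonneg (fun v _ => (hlam v).le)
  · rfl

include hlam in
lemma prodForm_sum_one : ∑ σ : Finset V, prodForm G lam σ = 1 := by
  rw [Finset.sum_congr rfl (fun σ _ => prodForm_eq G lam σ), ← Finset.sum_div]
  rw [show ∑ σ : Finset V, wgt G lam σ
      = ∑ σ' ∈ univ.filter (fun s => IsInd G s), ∏ v ∈ σ', lam v from (Finset.sum_filter _ _).symm]
  exact div_self (Z_pos G lam hlam).ne'

include hlam hq0 hqsupp hqsum in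
lemma prodForm_stat (σ' : Finset V) :
    ∑ σ : Finset V, prodForm G lam σ * pgdP G lam q σ σ' = prodForm G lam σ' := by
  rw [Finset.sum_congr rfl (fun σ _ => by rw [prodForm_eq G lam σ]), prodForm_eq G lam σ']
  rw [← wgt_stat G lam q hlam hq0 hqsupp hqsum σ', Finset.sum_div]
  apply Finset.sum_congr rfl
  intro σ _
  rw [div_mul_eq_mul_div]

include hlam hq0 hqsupp hqsum in
lemma prodForm_stat_pow (t : ℕ) (s : Finset V) :
    ∑ σ : Finset V, prodForm G lam σ * chainPow (pgdP G lam q) t σ s = prodForm G lam s := by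
  induction t generalizing s with
  | zero =>
    unfold chainPow
    rw [Finset.sum_congr rfl (fun σ _ => by
      rw [mul_ite, mul_one, mul_zero])]
    rw [Finset.sum_ite_eq' univ s (fun σ => prodForm G lam σ)]
    simp
  | succ t ih =>
    unfold chainPow
    calc ∑ σ : Finset V, prodForm G lam σ *
          ∑ z : Finset V, chainPow (pgdP G lam q) t σ z * pgdP G lam q z s
        = ∑ σ : Finset V, ∑ z : Finset V, prodForm G lam σ *
            (chainPow (pgdP G lam q) t σ z * pgdP G lam q z s) :=
          Finset.sum_congr rfl (fun σ _ => Finset.mul_sum _ _ _)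
      _ = ∑ z : Finset V, ∑ σ : Finset V, prodForm G lam σ *
            (chainPow (pgdP G lam q) t σ z * pgdP G lam q z s) := Finset.sum_comm
      _ = ∑ z : Finset V, (∑ σ : Finset V, prodForm G lam σ * chainPow (pgdP G lam q) t σ z)
            * pgdP G lam q z s := by
          apply Finset.sum_congr rfl; intro z _
          rw [Finset.sum_mul]
          apply Finset.sum_congr rfl; intro σ _
          ring
      _ = ∑ z : Finset V, prodForm G lam z * pgdP G lam q z s := by
          apply Finset.sum_congr rfl; intro z _
          rw [ih]
      _ = prodForm G lam s := prodForm_stat G lam q hlam hq0 hqsupp hqsum s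

end Stat2
section TV

lemma chainDist_eq {S : Type*} [Fintype S] [DecidableEq S] (P : S → S → ℝ) (x : S) (t : ℕ)
    (s : S) : chainDist P x t s = chainPow P t x s := by
  induction t generalizing s with
  | zero =>
    unfold chainDist chainPow
    by_cases h : s = x
    · rw [if_pos h, if_pos h.symm]
    · rw [if_neg h, if_neg (fun hh => h hh.symm)]
  | succ t ih =>
    unfold chainDist chainPow
    exact Finset.sum_congr rfl (fun s' _ => by rw [ih])

variable (G : SimpleGraph V) [DecidableRel G.Adj] (lam : V → ℝ) (q : Finset V → ℝ)
variable (hlam : ∀ v, 0 < lam v) (hq0 : ∀ m, 0 ≤ q m)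

include hlam hq0 in
lemma tv_pair (x y : Finset V) (t : ℕ) :
    (1/2) * ∑ s : Finset V, |chainPow (pgdP G lam q) t x s - chainPow (pgdP G lam q) t y s|
      ≤ ∑ v : V, dv G lam q x y t v := by
  have hρ : ∀ σ τ : Finset V, 0 ≤ cPow G lam q x y t σ τ :=
    cPow_nonneg G lam q hlam hq0 x y t
  set ρ : Finset V → Finset V → ℝ := cPow G lam q x y t with hρdef
  have hoffR : ∀ s : Finset V, (0:ℝ) ≤ ∑ τ : Finset V, (if τ = s then 0 else ρ s τ) := by
    intro s
    apply Finset.sum_nonneg; intro τ _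
    split_ifs <;> [exact le_refl 0; exact hρ s τ]
  have hoffC : ∀ s : Finset V, (0:ℝ) ≤ ∑ σ : Finset V, (if σ = s then 0 else ρ σ s) := by
    intro s
    apply Finset.sum_nonneg; intro σ _
    split_ifs <;> [exact le_refl 0; exact hρ σ s]
  have hsplit : ∀ (f : Finset V → ℝ) (s : Finset V), ∑ τ : Finset V, f τ
      = f s + ∑ τ : Finset V, (if τ = s then 0 else f τ) := by
    intro f s
    have h1 : ∀ τ : Finset V, f τ = (if τ = s then f τ else 0) + (if τ = s then 0 else f τ) := by
      intro τ; split_ifs <;> ring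
    rw [Finset.sum_congr rfl (fun τ _ => h1 τ), Finset.sum_add_distrib,
      Finset.sum_ite_eq' univ s f]
    simp
  have habs : ∀ s : Finset V, |chainPow (pgdP G lam q) t x s - chainPow (pgdP G lam q) t y s|
      ≤ (∑ τ : Finset V, (if τ = s then 0 else ρ s τ))
        + (∑ σ : Finset V, (if σ = s then 0 else ρ σ s)) := by
    intro s
    have hx : chainPow (pgdP G lam q) t x s = ρ s s + ∑ τ : Finset V, (if τ = s then 0 else ρ s τ) := by
      rw [← cPow_marg1 G lam q hlam hq0 x y t s]
      exact hsplit (fun τ => ρ s τ) s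
    have hy : chainPow (pgdP G lam q) t y s = ρ s s + ∑ σ : Finset V, (if σ = s then 0 else ρ σ s) := by
      rw [← cPow_marg2 G lam q hlam hq0 x y t s]
      exact hsplit (fun σ => ρ σ s) s
    rw [hx, hy]
    rw [abs_le]
    constructor <;> [linarith [hoffR s, hoffC s]; linarith [hoffR s, hoffC s]]
  have hOD : ∑ s : Finset V, ∑ τ : Finset V, (if τ = s then 0 else ρ s τ)
      ≤ ∑ v : V, dv G lam q x y t v := by
    calc ∑ s : Finset V, ∑ τ : Finset V, (if τ = s then 0 else ρ s τ)
        ≤ ∑ s : Finset V, ∑ τ : Finset V,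
            ∑ v : V, (if (v ∈ s ↔ v ∈ τ) then 0 else 1) * ρ s τ := by
          apply Finset.sum_le_sum; intro σ _
          apply Finset.sum_le_sum; intro τ _
          by_cases h : τ = σ
          · rw [if_pos h]
            apply Finset.sum_nonneg; intro v _
            have := hρ σ τ
            split_ifs <;> simp [this]
          · rw [if_neg h]
            have hex : ∃ v : V, ¬ (v ∈ σ ↔ v ∈ τ) := by
              by_contra hc
              push_neg at hc
              exact h (Finset.ext fun v => (hc v)).symm
            obtain ⟨v0, hv0⟩ := hex
            calc ρ σ τ = (if (v0 ∈ σ ↔ v0 ∈ τ) then 0 else 1) * ρ σ τ := by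
                  rw [if_neg hv0, one_mul]
              _ ≤ _ := Finset.single_le_sum (f := fun v =>
                    (if (v ∈ σ ↔ v ∈ τ) then (0:ℝ) else 1) * ρ σ τ)
                  (fun v _ => by
                    have := hρ σ τ
                    try simp only []
                    split_ifs <;> simp [this])
                  (Finset.mem_univ v0)
      _ = ∑ v : V, dv G lam q x y t v := by
          rw [Finset.sum_congr rfl (fun σ _ => Finset.sum_comm), Finset.sum_comm]
          rfl
  have hODC : ∑ s : Finset V, ∑ σ : Finset V, (if σ = s then 0 else ρ σ s)
      = ∑ s : Finset V, ∑ τ : Finset V, (if τ = s then 0 else ρ s τ) := by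
    rw [Finset.sum_comm]
    apply Finset.sum_congr rfl; intro σ _
    apply Finset.sum_congr rfl; intro s _
    by_cases h : σ = s
    · subst h
      simp
    · rw [if_neg h, if_neg (fun hh => h hh.symm)]
  calc (1/2) * ∑ s : Finset V, |chainPow (pgdP G lam q) t x s - chainPow (pgdP G lam q) t y s|
      ≤ (1/2) * ∑ s : Finset V, ((∑ τ : Finset V, (if τ = s then 0 else ρ s τ))
        + (∑ σ : Finset V, (if σ = s then 0 else ρ σ s))) := by
        have := Finset.sum_le_sum (fun s (_ : s ∈ (univ : Finset (Finset V))) => habs s)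
        linarith [this]
    _ = ∑ s : Finset V, ∑ τ : Finset V, (if τ = s then 0 else ρ s τ) := by
        rw [Finset.sum_add_distrib, hODC]
        ring
    _ ≤ ∑ v : V, dv G lam q x y t v := hOD

end TV
section Master
variable (G : SimpleGraph V) [DecidableRel G.Adj] (lam : V → ℝ) (q : Finset V → ℝ)
variable (hlam : ∀ v, 0 < lam v) (hq0 : ∀ m, 0 ≤ q m)
  (hqsupp : ∀ m, ¬ IsInd G m → q m = 0) (hqsum : ∑ m : Finset V, q m = 1)
  (hqv : ∀ v, 0 < qVert q v) (qmin qmax b : ℝ)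
  (hqmin_pos : 0 < qmin) (hqmin_le : ∀ v, qmin ≤ qVert q v)
  (hqmax_ge : ∀ v, qVert q v ≤ qmax)
  (hbge : ∀ v, ∑ w ∈ G.neighborFinset v, lam w / (1 + lam w) ≤ b)
  (hb0 : 0 ≤ b) (hb1 : b < 1)

include hlam hq0 hqsupp hqsum hqv hqmin_pos hqmin_le hqmax_ge hbge hb0 hb1 in
lemma tv_master [Nonempty V] (x : Finset V) (t : ℕ) :
    tvDist (chainDist (pgdP G lam q) x t) (prodForm G lam)
      ≤ qmax * ((1 - qmin * (1 - b))^t * ((Fintype.card V : ℝ) / qmin)) := by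
  set B := (1 - qmin * (1 - b))^t * ((Fintype.card V : ℝ) / qmin) with hBdef
  have hqmax0 : 0 ≤ qmax :=
    le_trans (qVert_nonneg q hq0 (Classical.arbitrary V)) (hqmax_ge _)
  have hB : ∀ y : Finset V, (1/2) * ∑ s : Finset V,
      |chainPow (pgdP G lam q) t x s - chainPow (pgdP G lam q) t y s| ≤ qmax * B := by
    intro y
    calc (1/2) * ∑ s : Finset V,
        |chainPow (pgdP G lam q) t x s - chainPow (pgdP G lam q) t y s|
        ≤ ∑ v : V, dv G lam q x y t v := tv_pair G lam q hlam hq0 x y t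
      _ ≤ ∑ v : V, qmax * (dv G lam q x y t v / qVert q v) := by
          apply Finset.sum_le_sum
          intro v _
          have hd := dv_nonneg G lam q hlam hq0 x y t v
          have hdq : 0 ≤ dv G lam q x y t v / qVert q v := div_nonneg hd (hqv v).le
          calc dv G lam q x y t v
              = dv G lam q x y t v / qVert q v * qVert q v :=
                (div_mul_cancel₀ _ (hqv v).ne').symm
            _ ≤ dv G lam q x y t v / qVert q v * qmax :=
                mul_le_mul_of_nonneg_left (hqmax_ge v) hdq
            _ = qmax * (dv G lam q x y t v / qVert q v) := by ring
      _ = qmax * Phi G lam q x y t := by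
          unfold Phi
          rw [Finset.mul_sum]
      _ ≤ qmax * B :=
          mul_le_mul_of_nonneg_left
            (Phi_decay G lam q hlam hq0 hqsum hqv qmin b hqmin_pos hqmin_le hbge hb0 hb1 x y t)
            hqmax0
  have hsum1 : ∑ y : Finset V, prodForm G lam y = 1 := prodForm_sum_one G lam hlam
  have hdiff : ∀ s : Finset V, chainDist (pgdP G lam q) x t s - prodForm G lam s
      = ∑ y : Finset V, prodForm G lam y *
          (chainPow (pgdP G lam q) t x s - chainPow (pgdP G lam q) t y s) := by
    intro s
    rw [chainDist_eq, ← prodForm_stat_pow G lam q hlam hq0 hqsupp hqsum t s]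
    calc chainPow (pgdP G lam q) t x s
          - ∑ y : Finset V, prodForm G lam y * chainPow (pgdP G lam q) t y s
        = (∑ y : Finset V, prodForm G lam y) * chainPow (pgdP G lam q) t x s
          - ∑ y : Finset V, prodForm G lam y * chainPow (pgdP G lam q) t y s := by
          rw [hsum1, one_mul]
      _ = ∑ y : Finset V, (prodForm G lam y * chainPow (pgdP G lam q) t x s
          - prodForm G lam y * chainPow (pgdP G lam q) t y s) := by
          rw [Finset.sum_mul, ← Finset.sum_sub_distrib]
      _ = _ := Finset.sum_congr rfl (fun y _ => by ring)
  unfold tvDist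
  calc (1/2) * ∑ s : Finset V, |chainDist (pgdP G lam q) x t s - prodForm G lam s|
      ≤ (1/2) * ∑ s : Finset V, ∑ y : Finset V, prodForm G lam y *
          |chainPow (pgdP G lam q) t x s - chainPow (pgdP G lam q) t y s| := by
        have hle : ∀ s : Finset V, |chainDist (pgdP G lam q) x t s - prodForm G lam s|
            ≤ ∑ y : Finset V, prodForm G lam y *
              |chainPow (pgdP G lam q) t x s - chainPow (pgdP G lam q) t y s| := by
          intro s
          rw [hdiff s]
          refine (Finset.abs_sum_le_sum_abs _ _).trans ?_
          apply Finset.sum_le_sum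
          intro y _
          rw [abs_mul, abs_of_nonneg (prodForm_nonneg G lam hlam y)]
        have := Finset.sum_le_sum (fun s (_ : s ∈ (univ : Finset (Finset V))) => hle s)
        linarith [this]
    _ = ∑ y : Finset V, prodForm G lam y * ((1/2) * ∑ s : Finset V,
          |chainPow (pgdP G lam q) t x s - chainPow (pgdP G lam q) t y s|) := by
        rw [Finset.sum_comm, Finset.mul_sum]
        apply Finset.sum_congr rfl
        intro y _
        rw [← Finset.mul_sum, Finset.mul_sum]
        rw [← Finset.mul_sum]
        ring
    _ ≤ ∑ y : Finset V, prodForm G lam y * (qmax * B) := by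
        apply Finset.sum_le_sum
        intro y _
        exact mul_le_mul_of_nonneg_left (hB y) (prodForm_nonneg G lam hlam y)
    _ = qmax * B := by
        rw [← Finset.sum_mul, hsum1, one_mul]

end Master


end AuxPGD

/-- Corollary 3 of the paper: with `q_min = min_v q_v`,
`q_max = max_v q_v`, `ξ = q_max/q_min`, if
`b = max_v Σ_{w∈N_v} λ_w/(1+λ_w) < 1`, then
`T_mix ≤ ⌈log(nξe) / (q_min (1-b))⌉`. -/
theorem pgd_fast_mixing_uniform_weights
    {V : Type*} [Fintype V] [DecidableEq V] [Nonempty V]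
    (G : SimpleGraph V) [DecidableRel G.Adj]
    (lam : V → ℝ) (hlam : ∀ v, 0 < lam v)
    (q : Finset V → ℝ)
    (hq0 : ∀ m, 0 ≤ q m)
    (hqsupp : ∀ m, ¬ IsInd G m → q m = 0)
    (hqsum : ∑ m : Finset V, q m = 1)
    (hqv : ∀ v, 0 < qVert q v)
    (qmin qmax ξ b : ℝ)
    (hqmin : qmin = univ.inf' univ_nonempty (fun v => qVert q v))
    (hqmax : qmax = univ.sup' univ_nonempty (fun v => qVert q v))
    (hξ : ξ = qmax / qmin)
    (hb : b = univ.sup' univ_nonempty (fun v =>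
      ∑ w ∈ G.neighborFinset v, lam w / (1 + lam w)))
    (hb1 : b < 1) :
    mixTime (pgdP G lam q) (prodForm G lam) (univ.filter (fun s => IsInd G s)) ≤
      ⌈Real.log ((Fintype.card V : ℝ) * ξ * Real.exp 1) / (qmin * (1 - b))⌉₊ := by

  have hqmin_le : ∀ v, qmin ≤ qVert q v := by
    intro v
    rw [hqmin]
    exact Finset.inf'_le _ (Finset.mem_univ v)
  have hqmax_ge : ∀ v, qVert q v ≤ qmax := by
    intro v
    rw [hqmax]
    exact Finset.le_sup' (fun v => qVert q v) (Finset.mem_univ v)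
  have hqmin_pos : 0 < qmin := by
    obtain ⟨v0, _, hv0⟩ := Finset.exists_mem_eq_inf' (univ_nonempty) (fun v => qVert q v)
    rw [hqmin, hv0]
    exact hqv v0
  have hbge : ∀ v, ∑ w ∈ G.neighborFinset v, lam w / (1 + lam w) ≤ b := by
    intro v
    rw [hb]
    exact Finset.le_sup' (fun v => ∑ w ∈ G.neighborFinset v, lam w / (1 + lam w))
      (Finset.mem_univ v)
  have hp : ∀ v, (0:ℝ) ≤ lam v / (1 + lam v) :=
    fun v => div_nonneg (hlam v).le (by linarith [hlam v])
  have hb0 : 0 ≤ b :=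
    le_trans (Finset.sum_nonneg fun w _ => hp w) (hbge (Classical.arbitrary V))
  have hqminmax : qmin ≤ qmax :=
    le_trans (hqmin_le (Classical.arbitrary V)) (hqmax_ge (Classical.arbitrary V))
  have hqmin1 : qmin ≤ 1 := by
    have h1 : qVert q (Classical.arbitrary V) ≤ 1 := by
      rw [← hqsum]
      unfold qVert
      apply Finset.sum_le_sum_of_subset_of_nonneg (Finset.filter_subset _ _)
      intro m _ _; exact hq0 m
    linarith [hqmin_le (Classical.arbitrary V)]
  set κ : ℝ := qmin * (1 - b) with hκdef
  have hκpos : 0 < κ := by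
    apply mul_pos hqmin_pos
    linarith
  have hκ1 : 0 ≤ 1 - κ := by nlinarith
  set n : ℝ := (Fintype.card V : ℝ) with hndef
  have hn1 : (1:ℝ) ≤ n := by
    rw [hndef]
    exact_mod_cast Nat.one_le_iff_ne_zero.mpr (Fintype.card_ne_zero)
  have hξ1 : (1:ℝ) ≤ ξ := by
    rw [hξ]
    rw [le_div_iff₀ hqmin_pos]
    linarith
  set T : ℕ := ⌈Real.log (n * ξ * Real.exp 1) / κ⌉₊ with hTdef
  unfold mixTime
  apply Finset.sup_le
  intro x _
  apply Nat.sInf_le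
  show tvDist (chainDist (pgdP G lam q) x T) (prodForm G lam) ≤ 1 / Real.exp 1
  have hmaster := tv_master G lam q hlam hq0 hqsupp hqsum hqv qmin qmax b hqmin_pos
    hqmin_le hqmax_ge hbge hb0 hb1 x T
  have hnξpos : 0 < n * ξ := by nlinarith
  have hstep2 : qmax * ((1 - κ)^T * (n / qmin)) = n * ξ * (1 - κ)^T := by
    rw [hξ]
    field_simp
    try ring
  have hexp : (1 - κ)^T ≤ Real.exp (-(κ * T)) := by
    calc (1 - κ)^T ≤ (Real.exp (-κ))^T := by
          apply pow_le_pow_left₀ hκ1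
          linarith [Real.add_one_le_exp (-κ)]
      _ = Real.exp (-(κ * T)) := by
          rw [← Real.exp_nat_mul]
          congr 1
          ring
  have hfin : n * ξ * Real.exp (-(κ * T)) ≤ 1 / Real.exp 1 := by
    rw [show n * ξ = Real.exp (Real.log (n * ξ)) from (Real.exp_log hnξpos).symm,
      ← Real.exp_add, one_div, ← Real.exp_neg]
    apply Real.exp_le_exp.mpr
    have hT : Real.log (n * ξ * Real.exp 1) / κ ≤ (T : ℝ) := Nat.le_ceil _
    have hL : Real.log (n * ξ * Real.exp 1) = Real.log (n * ξ) + 1 := by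
      rw [Real.log_mul (ne_of_gt hnξpos) (Real.exp_ne_zero 1), Real.log_exp]
    have h2 : Real.log (n * ξ * Real.exp 1) ≤ κ * T := by
      calc Real.log (n * ξ * Real.exp 1) = κ * (Real.log (n * ξ * Real.exp 1) / κ) := by
            field_simp
        _ ≤ κ * T := mul_le_mul_of_nonneg_left hT hκpos.le
    linarith [hL ▸ h2]
  calc tvDist (chainDist (pgdP G lam q) x T) (prodForm G lam)
      ≤ qmax * ((1 - κ)^T * (n / qmin)) := hmaster
    _ = n * ξ * (1 - κ)^T := hstep2
    _ ≤ n * ξ * Real.exp (-(κ * T)) := by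
        apply mul_le_mul_of_nonneg_left hexp hnξpos.le
    _ ≤ 1 / Real.exp 1 := hfin
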